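/- For two orthonormal generators {φ_ℓ}_{ℓ=1}^N, {ψ_ℓ}_{ℓ=1}^N of the same shift-invariant subspace A ⊂ L², the analog coherence μ(Φ,Ψ) = max_{ℓ,r} ess sup_ω |R_{φ_ℓψ_r}(e^{jω})| satisfies 1/√N ≤ μ(Φ,Ψ) ≤ 1. -/

import Mathlib

open MeasureTheory Real
open scoped BigOperators

/-- The sampled cross-spectrum `R_{φψ}(e^{jω})`. -/
noncomputable def sampledCross (T : ℝ) (f g : ℝ → ℂ) (ω : ℝ) : ℂ :=
  (1 / (T : ℂ)) * ∑' k : ℤ, (starRingEnd ℂ) (f ((ω - 2 * π * k) / T)) * g ((ω - 2 * π * k) / T)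

lemma ell2_of_tsum_ne_zero {f : ℤ → ℂ}
    (h : ∑' k, (starRingEnd ℂ) (f k) * f k ≠ 0) :
    Summable (fun k => ‖f k‖^2) := by
  have heq : (fun k => (starRingEnd ℂ) (f k) * f k)
      = fun k => ((‖f k‖^2 : ℝ) : ℂ) := by
    funext k
    rw [← Complex.normSq_eq_conj_mul_self, Complex.normSq_eq_norm_sq]
  rw [heq] at h
  by_contra hs
  exact h (tsum_eq_zero_of_not_summable (fun hc => hs (Complex.summable_ofReal.1 hc)))

lemma cs_summable {f g : ℤ → ℂ} (hf : Summable fun k => ‖f k‖^2)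
    (hg : Summable fun k => ‖g k‖^2) :
    Summable fun k => (starRingEnd ℂ) (f k) * g k := by
  apply Summable.of_norm
  apply Summable.of_nonneg_of_le (fun k => norm_nonneg _) (fun k => ?_) (hf.add hg)
  have h1 : ‖(starRingEnd ℂ) (f k) * g k‖ = ‖f k‖ * ‖g k‖ := by
    rw [norm_mul, RingHomIsometric.norm_map]
  rw [h1]
  nlinarith [norm_nonneg (f k), norm_nonneg (g k), sq_nonneg (‖f k‖ - ‖g k‖)]

lemma key {N : ℕ} {T : ℝ} (hT : T ≠ 0) (ω : ℝ)
    {Φ Ψ : Fin N → ℝ → ℂ} {c : Fin N → Fin N → ℝ → ℂ}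
    (hper : ∀ ℓ s, Function.Periodic (c ℓ s) (2 * π))
    (hexp : ∀ ℓ x, Φ ℓ x = ∑ s : Fin N, c ℓ s (x * T) * Ψ s x)
    (hb : ∀ s t : Fin N, sampledCross T (Ψ s) (Ψ t) ω = if s = t then 1 else 0)
    (ha : ∀ ℓ : Fin N, sampledCross T (Φ ℓ) (Φ ℓ) ω = 1) :
    ∀ ℓ r : Fin N, sampledCross T (Φ ℓ) (Ψ r) ω = (starRingEnd ℂ) (c ℓ r ω) ∧
      ∑ s : Fin N, ‖c ℓ s ω‖^2 = 1 := by
  set x : ℤ → ℝ := fun k => (ω - 2 * π * k) / T with hxdef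
  have hxT : ∀ k : ℤ, x k * T = ω - 2 * π * k := fun k => div_mul_cancel₀ _ hT
  have hcx : ∀ ℓ s (k : ℤ), c ℓ s (x k * T) = c ℓ s ω := by
    intro ℓ s k
    rw [hxT k]
    have : ω - 2 * π * k = ω - k * (2 * π) := by ring
    rw [this]
    exact (hper ℓ s).sub_int_mul_eq k
  -- Ψ diagonal ℓ² summability
  have hΨsum : ∀ s, Summable fun k : ℤ => ‖Ψ s (x k)‖^2 := by
    intro s
    apply ell2_of_tsum_ne_zero
    intro h0
    have := hb s s
    simp only [if_pos rfl, sampledCross] at this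
    rw [h0, mul_zero] at this
    exact zero_ne_one this
  have hinner : ∀ s t, Summable fun k : ℤ => (starRingEnd ℂ) (Ψ s (x k)) * Ψ t (x k) :=
    fun s t => cs_summable (hΨsum s) (hΨsum t)
  -- expansion of the summand of R_{ΦℓΨr}
  have hsummand1 : ∀ ℓ r (k : ℤ),
      (starRingEnd ℂ) (Φ ℓ (x k)) * Ψ r (x k)
      = ∑ s : Fin N, (starRingEnd ℂ) (c ℓ s ω) *
          ((starRingEnd ℂ) (Ψ s (x k)) * Ψ r (x k)) := by
    intro ℓ r k
    rw [hexp ℓ (x k), map_sum, Finset.sum_mul]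
    refine Finset.sum_congr rfl fun s _ => ?_
    rw [map_mul, hcx ℓ s k]
    ring
  have hRΦΨ : ∀ ℓ r, sampledCross T (Φ ℓ) (Ψ r) ω = (starRingEnd ℂ) (c ℓ r ω) := by
    intro ℓ r
    unfold sampledCross
    rw [tsum_congr (hsummand1 ℓ r),
      Summable.tsum_finsetSum (fun s _ => (hinner s r).mul_left _)]
    rw [Finset.mul_sum]
    have : ∀ s : Fin N, (1 / (T:ℂ)) * ∑' k : ℤ, (starRingEnd ℂ) (c ℓ s ω) *
          ((starRingEnd ℂ) (Ψ s (x k)) * Ψ r (x k))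
        = (starRingEnd ℂ) (c ℓ s ω) * sampledCross T (Ψ s) (Ψ r) ω := by
      intro s
      rw [tsum_mul_left]
      unfold sampledCross
      ring
    rw [Finset.sum_congr rfl (fun s _ => this s)]
    simp only [hb]
    simp
  -- expansion of the summand of R_{ΦℓΦℓ}
  have hsummand2 : ∀ ℓ (k : ℤ),
      (starRingEnd ℂ) (Φ ℓ (x k)) * Φ ℓ (x k)
      = ∑ s : Fin N, ∑ t : Fin N, ((starRingEnd ℂ) (c ℓ s ω) * c ℓ t ω) *
          ((starRingEnd ℂ) (Ψ s (x k)) * Ψ t (x k)) := by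
    intro ℓ k
    rw [hexp ℓ (x k), map_sum, Finset.sum_mul_sum]
    refine Finset.sum_congr rfl fun s _ => Finset.sum_congr rfl fun t _ => ?_
    rw [map_mul, hcx ℓ s k, hcx ℓ t k]
    ring
  have hrow : ∀ ℓ, ∑ s : Fin N, ‖c ℓ s ω‖^2 = 1 := by
    intro ℓ
    have h1 : sampledCross T (Φ ℓ) (Φ ℓ) ω
        = ∑ s : Fin N, ((starRingEnd ℂ) (c ℓ s ω) * c ℓ s ω) := by
      unfold sampledCross
      rw [tsum_congr (hsummand2 ℓ),
        Summable.tsum_finsetSum (fun s _ => summable_sum fun t _ => (hinner s t).mul_left _)]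
      rw [Finset.mul_sum]
      refine Finset.sum_congr rfl fun s _ => ?_
      rw [Summable.tsum_finsetSum (fun t _ => (hinner s t).mul_left _), Finset.mul_sum]
      have : ∀ t : Fin N, (1 / (T:ℂ)) * ∑' k : ℤ, ((starRingEnd ℂ) (c ℓ s ω) * c ℓ t ω) *
            ((starRingEnd ℂ) (Ψ s (x k)) * Ψ t (x k))
          = ((starRingEnd ℂ) (c ℓ s ω) * c ℓ t ω) * sampledCross T (Ψ s) (Ψ t) ω := by
        intro t
        rw [tsum_mul_left]
        unfold sampledCross
        ring
      rw [Finset.sum_congr rfl (fun t _ => this t)]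
      simp only [hb]
      simp
    rw [ha ℓ] at h1
    have h2 : ((1:ℝ) : ℂ) = ((∑ s : Fin N, ‖c ℓ s ω‖^2 : ℝ) : ℂ) := by
      push_cast
      rw [h1]
      refine Finset.sum_congr rfl fun s _ => ?_
      rw [← Complex.normSq_eq_conj_mul_self, Complex.normSq_eq_norm_sq,
        Complex.ofReal_pow]
    exact (Complex.ofReal_injective h2).symm
  exact fun ℓ r => ⟨hRΦΨ ℓ r, hrow ℓ⟩

/-- Bounds on the analog coherence of two orthonormal generators of the same
shift-invariant space: `1/√N ≤ μ(Φ,Ψ) ≤ 1`, where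
`μ(Φ,Ψ) = max_{ℓ,r} ess sup_ω |R_{φ_ℓψ_r}(e^{jω})|`. -/
theorem stmt11 (N : ℕ) (hN : 0 < N) (T : ℝ) (hT : 0 < T)
    (Φ Ψ : Fin N → ℝ → ℂ)
    (hΦmeas : ∀ ℓ, Measurable (Φ ℓ)) (hΨmeas : ∀ ℓ, Measurable (Ψ ℓ))
    (hΦorth : ∀ ℓ r, ∀ᵐ ω ∂(volume : Measure ℝ),
      sampledCross T (Φ ℓ) (Φ r) ω = if ℓ = r then 1 else 0)
    (hΨorth : ∀ ℓ r, ∀ᵐ ω ∂(volume : Measure ℝ),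
      sampledCross T (Ψ ℓ) (Ψ r) ω = if ℓ = r then 1 else 0)
    -- both families generate the same shift-invariant space: each `Φ ℓ` expands in `Ψ`
    (hspanΦ : ∀ ℓ, ∃ c : Fin N → ℝ → ℂ, (∀ r, Function.Periodic (c r) (2 * π)) ∧
      ∀ ω, Φ ℓ ω = ∑ r : Fin N, c r (ω * T) * Ψ r ω)
    (hspanΨ : ∀ ℓ, ∃ c : Fin N → ℝ → ℂ, (∀ r, Function.Periodic (c r) (2 * π)) ∧
      ∀ ω, Ψ ℓ ω = ∑ r : Fin N, c r (ω * T) * Φ r ω)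
    (μ : ℝ)
    (hμ : μ = ⨆ ℓ : Fin N, ⨆ r : Fin N,
      essSup (fun ω => ‖sampledCross T (Φ ℓ) (Ψ r) ω‖) (volume : Measure ℝ)) :
    1 / Real.sqrt N ≤ μ ∧ μ ≤ 1 := by
  haveI : Nonempty (Fin N) := ⟨⟨0, hN⟩⟩
  haveI : (ae (volume : Measure ℝ)).NeBot := ae_neBot.2 (by
    intro h
    have := congrArg (fun m : Measure ℝ => m (Set.Icc 0 1)) h
    simp [Real.volume_Icc] at this)
  -- choose the expansion coefficients
  set c : Fin N → Fin N → ℝ → ℂ := fun ℓ => (hspanΦ ℓ).choose with hc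
  have hper : ∀ ℓ s, Function.Periodic (c ℓ s) (2 * π) := fun ℓ => (hspanΦ ℓ).choose_spec.1
  have hexp : ∀ ℓ x, Φ ℓ x = ∑ s : Fin N, c ℓ s (x * T) * Ψ s x :=
    fun ℓ => (hspanΦ ℓ).choose_spec.2
  -- the a.e. good set
  have hae : ∀ᵐ ω ∂(volume : Measure ℝ), ∀ ℓ r : Fin N,
      sampledCross T (Φ ℓ) (Ψ r) ω = (starRingEnd ℂ) (c ℓ r ω) ∧
      ∑ s : Fin N, ‖c ℓ s ω‖^2 = 1 := by
    have hb : ∀ᵐ ω ∂(volume : Measure ℝ), ∀ s t : Fin N,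
        sampledCross T (Ψ s) (Ψ t) ω = if s = t then 1 else 0 :=
      ae_all_iff.2 fun s => ae_all_iff.2 fun t => hΨorth s t
    have ha : ∀ᵐ ω ∂(volume : Measure ℝ), ∀ ℓ : Fin N,
        sampledCross T (Φ ℓ) (Φ ℓ) ω = 1 :=
      ae_all_iff.2 fun ℓ => (hΦorth ℓ ℓ).mono fun ω h => by simpa using h
    filter_upwards [hb, ha] with ω hbω haω
    exact key hT.ne' ω hper hexp hbω haω
  -- each entry is a.e. bounded by 1
  have haele : ∀ ℓ r : Fin N, ∀ᵐ ω ∂(volume : Measure ℝ),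
      ‖sampledCross T (Φ ℓ) (Ψ r) ω‖ ≤ 1 := by
    intro ℓ r
    filter_upwards [hae] with ω hω
    obtain ⟨hR, hrow⟩ := hω ℓ r
    rw [hR]
    have h1 : ‖(starRingEnd ℂ) (c ℓ r ω)‖ = ‖c ℓ r ω‖ := RingHomIsometric.norm_map
    rw [h1]
    have h2 : ‖c ℓ r ω‖^2 ≤ 1 := by
      rw [← hrow]
      exact Finset.single_le_sum (f := fun s : Fin N => ‖c ℓ s ω‖^2) (fun s _ => sq_nonneg _) (Finset.mem_univ r)
    nlinarith [norm_nonneg (c ℓ r ω)]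
  have hess_le : ∀ ℓ r : Fin N,
      essSup (fun ω => ‖sampledCross T (Φ ℓ) (Ψ r) ω‖) (volume : Measure ℝ) ≤ 1 :=
    fun ℓ r => Filter.limsup_le_of_le
      (Filter.isCoboundedUnder_le_of_le _ fun ω => norm_nonneg _) (haele ℓ r)
  have hbddr : ∀ ℓ : Fin N, BddAbove (Set.range fun r : Fin N =>
      essSup (fun ω => ‖sampledCross T (Φ ℓ) (Ψ r) ω‖) (volume : Measure ℝ)) :=
    fun ℓ => ⟨1, Set.forall_mem_range.2 fun r => hess_le ℓ r⟩
  have hbddl : BddAbove (Set.range fun ℓ : Fin N => ⨆ r : Fin N,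
      essSup (fun ω => ‖sampledCross T (Φ ℓ) (Ψ r) ω‖) (volume : Measure ℝ)) :=
    ⟨1, Set.forall_mem_range.2 fun ℓ => ciSup_le fun r => hess_le ℓ r⟩
  constructor
  · -- lower bound
    -- a.e. every entry is ≤ its essSup
    have haess : ∀ ℓ r : Fin N, ∀ᵐ ω ∂(volume : Measure ℝ),
        ‖sampledCross T (Φ ℓ) (Ψ r) ω‖ ≤
          essSup (fun ω => ‖sampledCross T (Φ ℓ) (Ψ r) ω‖) (volume : Measure ℝ) :=
      fun ℓ r => ae_le_essSup ⟨1, (haele ℓ r)⟩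
    have haess' : ∀ᵐ ω ∂(volume : Measure ℝ), ∀ ℓ r : Fin N,
        ‖sampledCross T (Φ ℓ) (Ψ r) ω‖ ≤
          essSup (fun ω => ‖sampledCross T (Φ ℓ) (Ψ r) ω‖) (volume : Measure ℝ) :=
      ae_all_iff.2 fun ℓ => ae_all_iff.2 fun r => haess ℓ r
    obtain ⟨ω, hω1, hω2⟩ := (hae.and haess').exists
    -- total mass N
    have htot : ∑ ℓ : Fin N, ∑ r : Fin N, ‖sampledCross T (Φ ℓ) (Ψ r) ω‖^2 = N := by
      have : ∀ ℓ r : Fin N, ‖sampledCross T (Φ ℓ) (Ψ r) ω‖^2 = ‖c ℓ r ω‖^2 := by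
        intro ℓ r
        rw [(hω1 ℓ r).1]
        congr 1
        exact RingHomIsometric.norm_map
      simp_rw [this]
      rw [Finset.sum_congr rfl fun ℓ _ => (hω1 ℓ ⟨0, hN⟩).2]
      simp
    -- some entry is large
    have hex : ∃ ℓ r : Fin N, 1 / Real.sqrt N ≤ ‖sampledCross T (Φ ℓ) (Ψ r) ω‖ := by
      by_contra hcon
      push_neg at hcon
      have hNpos : (0:ℝ) < N := Nat.cast_pos.2 hN
      have hsq : ∀ ℓ r : Fin N, ‖sampledCross T (Φ ℓ) (Ψ r) ω‖^2 < 1 / N := by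
        intro ℓ r
        have h := hcon ℓ r
        have hs : (0:ℝ) < Real.sqrt N := Real.sqrt_pos.2 hNpos
        have : ‖sampledCross T (Φ ℓ) (Ψ r) ω‖^2 < (1 / Real.sqrt N)^2 := by
          apply sq_lt_sq' _ h
          · linarith [norm_nonneg (sampledCross T (Φ ℓ) (Ψ r) ω), one_div_pos.2 hs]
        calc ‖sampledCross T (Φ ℓ) (Ψ r) ω‖^2 < (1 / Real.sqrt N)^2 := this
          _ = 1 / N := by rw [div_pow, one_pow, Real.sq_sqrt hNpos.le]
      have hlt : ∑ ℓ : Fin N, ∑ r : Fin N, ‖sampledCross T (Φ ℓ) (Ψ r) ω‖^2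
          < ∑ ℓ : Fin N, ∑ r : Fin N, (1 / N : ℝ) := by
        apply Finset.sum_lt_sum_of_nonempty (by simp [Finset.univ_nonempty])
        intro ℓ _
        apply Finset.sum_lt_sum_of_nonempty (by simp [Finset.univ_nonempty])
        intro r _
        exact hsq ℓ r
      rw [htot] at hlt
      simp only [Finset.sum_const, Finset.card_univ, Fintype.card_fin, nsmul_eq_mul] at hlt
      rw [show (N:ℝ) * ((N:ℝ) * (1 / N)) = N by field_simp] at hlt
      exact lt_irrefl _ hlt
    obtain ⟨ℓ, r, hlr⟩ := hex
    calc 1 / Real.sqrt N ≤ ‖sampledCross T (Φ ℓ) (Ψ r) ω‖ := hlr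
      _ ≤ essSup (fun ω => ‖sampledCross T (Φ ℓ) (Ψ r) ω‖) (volume : Measure ℝ) := hω2 ℓ r
      _ ≤ ⨆ r' : Fin N,
          essSup (fun ω => ‖sampledCross T (Φ ℓ) (Ψ r') ω‖) (volume : Measure ℝ) :=
        le_ciSup (hbddr ℓ) r
      _ ≤ μ := by rw [hμ]; exact le_ciSup hbddl ℓ
  · rw [hμ]
    exact ciSup_le fun ℓ => ciSup_le fun r => hess_le ℓ r
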